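/- arXiv:1902.09633 — 5 statements merged into one kernel-verified Lean document; each statement's English description precedes it below -/
import Mathlib

section
/- For every γ with 0 < γ ≤ 1, the kernel C_γ on the nonnegative half-line defined by C_γ(s,t) = (s+t)^γ − (max(s,t))^γ is nonnegative definite; that is, for every n ∈ ℕ, all t_1,…,t_n ≥ 0, and all complex numbers z_1,…,z_n, one has Σ_{j,k=1}^n z_j · C_γ(t_j,t_k) · conj(z_k) ≥ 0 (this sum is real and nonnegative). -/
open MeasureTheory Set Real

open scoped ComplexOrder

/-- The kernel `C_γ(s,t) = (s+t)^γ − (max(s,t))^γ`. -/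
noncomputable def Cker (γ s t : ℝ) : ℝ := (s + t) ^ γ - max s t ^ γ

/-- Generic PSD-from-integral-representation lemma. -/
lemma key_sum_sq {n : ℕ} (g : Fin n → ℝ → ℝ) (w : ℝ → ℝ) (hw : ∀ x, 0 ≤ w x)
    (hint : ∀ j k : Fin n, Integrable (fun x => g j x * g k x * w x)) :
    0 ≤ ∑ j : Fin n, ∑ k : Fin n, ∫ x, g j x * g k x * w x := by
  have h1 : ∀ j : Fin n, ∑ k : Fin n, ∫ x, g j x * g k x * w x
      = ∫ x, ∑ k : Fin n, g j x * g k x * w x := fun j =>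
    (integral_finset_sum Finset.univ (fun k _ => hint j k)).symm
  simp_rw [h1]
  rw [← integral_finset_sum Finset.univ (fun j _ =>
    integrable_finset_sum Finset.univ (fun k _ => hint j k))]
  apply integral_nonneg
  intro x
  simp only [Pi.zero_apply]
  have : ∑ j : Fin n, ∑ k : Fin n, g j x * g k x * w x
      = (∑ j : Fin n, g j x) ^ 2 * w x := by
    rw [sq, Finset.sum_mul_sum]
    simp_rw [Finset.sum_mul]
  rw [this]
  exact mul_nonneg (sq_nonneg _) (hw x)

/-- pointwise indicator product identity -/
lemma ind_prod (s t : Set ℝ) (a b : ℝ) (w : ℝ → ℝ) (x : ℝ) :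
    s.indicator (fun _ => a) x * t.indicator (fun _ => b) x * w x
      = (s ∩ t).indicator (fun y => a * b * w y) x := by
  by_cases hs : x ∈ s <;> by_cases ht : x ∈ t <;>
    simp [Set.indicator_of_mem, Set.indicator_of_notMem, hs, ht, Set.mem_inter_iff]

example (m : ℝ) (hm : 0 ≤ m) : ∫ x in Ioo (0:ℝ) m, (1:ℝ) = m := by
  simp [Real.volume_Ioo, ENNReal.toReal_ofReal hm, hm]

/-- ∫_{Ioo 0 m} θ e^{θx} dx = e^{θm} - 1 -/
lemma int_exp_Ioo (θ m : ℝ) (hθ : 0 < θ) (hm : 0 ≤ m) :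
    ∫ x in Ioo (0:ℝ) m, θ * Real.exp (θ * x) = Real.exp (θ * m) - 1 := by
  rw [← integral_Ioc_eq_integral_Ioo, ← intervalIntegral.integral_of_le hm]
  rw [intervalIntegral.integral_const_mul]
  rw [intervalIntegral.integral_comp_mul_left (fun u => Real.exp u) hθ.ne']
  rw [integral_exp]
  rw [smul_eq_mul, mul_zero, Real.exp_zero]
  field_simp


lemma aesm_g (γ a : ℝ) :
    AEStronglyMeasurable (fun θ : ℝ => θ ^ (-1-γ) * (1 - Real.exp (-(a*θ)))) volume := by
  apply Measurable.aestronglyMeasurable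
  exact (measurable_id.pow_const _).mul ((measurable_const.sub
    ((measurable_const_mul a).neg.exp)))

lemma integrable_g (γ a : ℝ) (hγ0 : 0 < γ) (hγ1 : γ < 1) (ha : 0 ≤ a) :
    IntegrableOn (fun θ : ℝ => θ ^ (-1-γ) * (1 - Real.exp (-(a*θ)))) (Ioi 0) := by
  have hsub : Ioi (0:ℝ) ⊆ Ioo 0 1 ∪ Ici 1 := by
    intro x hx
    rcases lt_or_ge x 1 with h | h
    · exact Or.inl ⟨hx, h⟩
    · exact Or.inr h
  have hbound : ∀ θ : ℝ, 0 < θ → 0 ≤ 1 - Real.exp (-(a*θ)) ∧ 1 - Real.exp (-(a*θ)) ≤ min 1 (a*θ) := by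
    intro θ hθ
    have h1 : Real.exp (-(a*θ)) ≤ 1 := Real.exp_le_one_iff.2 (by nlinarith)
    have h2 : (-(a*θ)) + 1 ≤ Real.exp (-(a*θ)) := Real.add_one_le_exp _
    have h3 : 0 < Real.exp (-(a*θ)) := Real.exp_pos _
    constructor
    · linarith
    · exact le_min (by linarith) (by linarith)
  apply IntegrableOn.mono_set _ hsub
  apply IntegrableOn.union
  · -- on Ioo 0 1, dominate by a * θ^(-γ)
    have hg : IntegrableOn (fun θ : ℝ => a * θ ^ (-γ)) (Ioo (0:ℝ) 1) :=
      ((intervalIntegral.integrableOn_Ioo_rpow_iff zero_lt_one).2 (by linarith)).const_mul a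
    apply Integrable.mono hg ((aesm_g γ a).restrict)
    filter_upwards [ae_restrict_mem measurableSet_Ioo] with θ hθ
    obtain ⟨h0, hle⟩ := hbound θ hθ.1
    have hθp := hθ.1
    have hrp : (0:ℝ) ≤ θ ^ (-1-γ) := Real.rpow_nonneg hθp.le _
    rw [Real.norm_eq_abs, Real.norm_eq_abs, abs_of_nonneg (mul_nonneg hrp h0),
      abs_of_nonneg (by positivity)]
    calc θ ^ (-1-γ) * (1 - Real.exp (-(a*θ))) ≤ θ ^ (-1-γ) * (a*θ) :=
          mul_le_mul_of_nonneg_left (hle.trans (min_le_right _ _)) hrp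
      _ = a * (θ ^ (-1-γ) * θ ^ (1:ℝ)) := by rw [Real.rpow_one]; ring
      _ = a * θ ^ (-γ) := by rw [← Real.rpow_add hθp]; ring_nf
  · -- on Ici 1, dominate by θ^(-1-γ)
    rw [integrableOn_Ici_iff_integrableOn_Ioi]
    have hg : IntegrableOn (fun θ : ℝ => θ ^ (-1-γ)) (Ioi (1:ℝ)) :=
      integrableOn_Ioi_rpow_of_lt (by linarith) zero_lt_one
    apply Integrable.mono hg ((aesm_g γ a).restrict)
    filter_upwards [ae_restrict_mem measurableSet_Ioi] with θ hθ
    have hθp : (0:ℝ) < θ := lt_trans zero_lt_one hθ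
    obtain ⟨h0, hle⟩ := hbound θ hθp
    have hrp : (0:ℝ) ≤ θ ^ (-1-γ) := Real.rpow_nonneg hθp.le _
    rw [Real.norm_eq_abs, Real.norm_eq_abs, abs_of_nonneg (mul_nonneg hrp h0),
      abs_of_nonneg hrp]
    nlinarith [hle.trans (min_le_left _ _)]

noncomputable def Fγ (γ a : ℝ) : ℝ := ∫ θ in Ioi (0:ℝ), θ ^ (-1-γ) * (1 - Real.exp (-(a*θ)))

lemma Fγ_scale (γ a : ℝ) (hγ0 : 0 < γ) (ha : 0 ≤ a) : Fγ γ a = a ^ γ * Fγ γ 1 := by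
  rcases eq_or_lt_of_le ha with h | h
  · simp [Fγ, ← h, Real.zero_rpow hγ0.ne']
  · unfold Fγ
    have hcong : ∀ θ ∈ Ioi (0:ℝ),
        θ ^ (-1-γ) * (1 - Real.exp (-(a*θ)))
          = a ^ (1+γ) * ((a*θ) ^ (-1-γ) * (1 - Real.exp (-(1*(a*θ))))) := by
      intro θ hθ
      have hθp : (0:ℝ) < θ := hθ
      rw [Real.mul_rpow h.le hθp.le, one_mul]
      rw [show a ^ (1+γ) * (a ^ (-1-γ) * θ ^ (-1-γ) * (1 - Real.exp (-(a*θ))))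
          = (a ^ (1+γ) * a ^ (-1-γ)) * (θ ^ (-1-γ) * (1 - Real.exp (-(a*θ)))) by ring]
      rw [← Real.rpow_add h]
      norm_num
    rw [setIntegral_congr_fun measurableSet_Ioi hcong]
    rw [integral_const_mul]
    rw [integral_comp_mul_left_Ioi (fun u => u ^ (-1-γ) * (1 - Real.exp (-(1*u)))) 0 h]
    rw [mul_zero, smul_eq_mul, ← mul_assoc]
    congr 1
    rw [← Real.rpow_neg_one a, ← Real.rpow_add h]
    norm_num

lemma Fγ_pos (γ : ℝ) (hγ0 : 0 < γ) (hγ1 : γ < 1) : 0 < Fγ γ 1 := by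
  unfold Fγ
  have hnn : 0 ≤ᶠ[ae (volume.restrict (Ioi (0:ℝ)))]
      fun θ : ℝ => θ ^ (-1-γ) * (1 - Real.exp (-(1*θ))) := by
    filter_upwards [ae_restrict_mem measurableSet_Ioi] with θ hθ
    have hθp : (0:ℝ) < θ := hθ
    have : Real.exp (-(1*θ)) ≤ 1 := Real.exp_le_one_iff.2 (by linarith)
    exact mul_nonneg (Real.rpow_nonneg hθp.le _) (by linarith)
  rw [setIntegral_pos_iff_support_of_nonneg_ae hnn (integrable_g γ 1 hγ0 hγ1 zero_le_one)]
  have hsub : Ioi (0:ℝ) ⊆ Function.support (fun θ : ℝ => θ ^ (-1-γ) * (1 - Real.exp (-(1*θ)))) ∩ Ioi 0 := by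
    intro θ hθ
    have hθp : (0:ℝ) < θ := hθ
    refine ⟨?_, hθ⟩
    have h1 : (0:ℝ) < θ ^ (-1-γ) := Real.rpow_pos_of_pos hθp _
    have h2 : Real.exp (-(1*θ)) < 1 := by
      rw [Real.exp_lt_one_iff]; linarith
    exact ne_of_gt (mul_pos h1 (by linarith))
  calc (0:ENNReal) < volume (Ioi (0:ℝ)) := by simp [Real.volume_Ioi]
    _ ≤ _ := measure_mono hsub

lemma integrable_diff (γ a b : ℝ) (hγ0 : 0 < γ) (hγ1 : γ < 1) (ha : 0 ≤ a) (hb : 0 ≤ b) :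
    IntegrableOn (fun θ : ℝ => θ ^ (-1-γ) * (Real.exp (-(a*θ)) - Real.exp (-(b*θ)))) (Ioi 0) := by
  have h := (integrable_g γ b hγ0 hγ1 hb).sub (integrable_g γ a hγ0 hγ1 ha)
  exact h.congr (Filter.Eventually.of_forall fun θ => by simp only [Pi.sub_apply]; ring)

lemma Fγ_diff (γ a b : ℝ) (hγ0 : 0 < γ) (hγ1 : γ < 1) (ha : 0 ≤ a) (hb : 0 ≤ b) :
    Fγ γ b - Fγ γ a
      = ∫ θ in Ioi (0:ℝ), θ ^ (-1-γ) * (Real.exp (-(a*θ)) - Real.exp (-(b*θ))) := by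
  unfold Fγ
  rw [← integral_sub (integrable_g γ b hγ0 hγ1 hb) (integrable_g γ a hγ0 hγ1 ha)]
  apply integral_congr_ae
  exact Filter.Eventually.of_forall fun θ => by ring

lemma term_integral {n : ℕ} (t : Fin n → ℝ) (ht : ∀ i, 0 ≤ t i) (a : Fin n → ℝ)
    (θ : ℝ) (hθ : 0 < θ) (j k : Fin n) :
    (Integrable (fun x : ℝ =>
        (Ioo (0:ℝ) (t j)).indicator (fun _ => a j * Real.exp (-(θ * t j))) x *
        (Ioo (0:ℝ) (t k)).indicator (fun _ => a k * Real.exp (-(θ * t k))) x *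
        (θ * Real.exp (θ * x)))) ∧
    (∫ x : ℝ,
        (Ioo (0:ℝ) (t j)).indicator (fun _ => a j * Real.exp (-(θ * t j))) x *
        (Ioo (0:ℝ) (t k)).indicator (fun _ => a k * Real.exp (-(θ * t k))) x *
        (θ * Real.exp (θ * x))
      = a j * a k * (Real.exp (-(θ * (t j + t k))) * (Real.exp (θ * min (t j) (t k)) - 1))) := by
  set cj := a j * Real.exp (-(θ * t j)) with hcj
  set ck := a k * Real.exp (-(θ * t k)) with hck
  have hpt : ∀ x : ℝ,
      (Ioo (0:ℝ) (t j)).indicator (fun _ => cj) x *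
      (Ioo (0:ℝ) (t k)).indicator (fun _ => ck) x * (θ * Real.exp (θ * x))
        = (Ioo (0:ℝ) (min (t j) (t k))).indicator
            (fun x => cj * ck * (θ * Real.exp (θ * x))) x := by
    intro x
    rw [ind_prod (Ioo (0:ℝ) (t j)) (Ioo (0:ℝ) (t k)) cj ck (fun x => θ * Real.exp (θ * x)) x]
    congr 1
    rw [Set.Ioo_inter_Ioo, max_self]
  have hint : IntegrableOn (fun x : ℝ => cj * ck * (θ * Real.exp (θ * x)))
      (Ioo (0:ℝ) (min (t j) (t k))) := by
    exact ((by continuity : Continuous (fun x : ℝ => cj * ck * (θ * Real.exp (θ * x)))).integrableOn_Icc).mono_set Set.Ioo_subset_Icc_self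
  constructor
  · rw [show (fun x : ℝ =>
        (Ioo (0:ℝ) (t j)).indicator (fun _ => cj) x *
        (Ioo (0:ℝ) (t k)).indicator (fun _ => ck) x * (θ * Real.exp (θ * x)))
      = fun x => (Ioo (0:ℝ) (min (t j) (t k))).indicator
            (fun x => cj * ck * (θ * Real.exp (θ * x))) x from funext hpt]
    exact hint.integrable_indicator measurableSet_Ioo
  · simp_rw [hpt]
    rw [integral_indicator measurableSet_Ioo]
    rw [MeasureTheory.integral_const_mul]
    rw [int_exp_Ioo θ _ hθ (le_min (ht j) (ht k))]
    rw [hcj, hck]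
    rw [show -(θ * (t j + t k)) = -(θ * t j) + -(θ * t k) by ring, Real.exp_add]
    ring

lemma S_nonneg {n : ℕ} (t : Fin n → ℝ) (ht : ∀ i, 0 ≤ t i) (a : Fin n → ℝ)
    (θ : ℝ) (hθ : 0 < θ) :
    0 ≤ ∑ j : Fin n, ∑ k : Fin n,
        a j * a k * (Real.exp (-(θ * (t j + t k))) * (Real.exp (θ * min (t j) (t k)) - 1)) := by
  have h := key_sum_sq
    (fun j x => (Ioo (0:ℝ) (t j)).indicator (fun _ => a j * Real.exp (-(θ * t j))) x)
    (fun x => θ * Real.exp (θ * x)) (fun x => by positivity)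
    (fun j k => (term_integral t ht a θ hθ j k).1)
  calc (0:ℝ) ≤ _ := h
    _ = _ := Finset.sum_congr rfl fun j _ => Finset.sum_congr rfl fun k _ =>
        (term_integral t ht a θ hθ j k).2

lemma min_psd {n : ℕ} (t : Fin n → ℝ) (ht : ∀ i, 0 ≤ t i) (a : Fin n → ℝ) :
    0 ≤ ∑ j : Fin n, ∑ k : Fin n, a j * a k * min (t j) (t k) := by
  have hpt : ∀ (j k : Fin n) (x : ℝ),
      (Ioo (0:ℝ) (t j)).indicator (fun _ => a j) x *
      (Ioo (0:ℝ) (t k)).indicator (fun _ => a k) x * (1:ℝ)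
        = (Ioo (0:ℝ) (min (t j) (t k))).indicator (fun _ => a j * a k * 1) x := by
    intro j k x
    rw [ind_prod (Ioo (0:ℝ) (t j)) (Ioo (0:ℝ) (t k)) (a j) (a k) (fun _ => (1:ℝ)) x]
    congr 1
    rw [Set.Ioo_inter_Ioo, max_self]
  have hint : ∀ j k : Fin n, Integrable (fun x : ℝ =>
      (Ioo (0:ℝ) (t j)).indicator (fun _ => a j) x *
      (Ioo (0:ℝ) (t k)).indicator (fun _ => a k) x * (1:ℝ)) := by
    intro j k
    rw [show (fun x : ℝ =>
        (Ioo (0:ℝ) (t j)).indicator (fun _ => a j) x *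
        (Ioo (0:ℝ) (t k)).indicator (fun _ => a k) x * (1:ℝ))
      = fun x => (Ioo (0:ℝ) (min (t j) (t k))).indicator (fun _ => a j * a k * 1) x
      from funext (hpt j k)]
    exact (integrableOn_const (by simp [Real.volume_Ioo]) : IntegrableOn (fun _ => a j * a k * 1) (Ioo (0:ℝ) (min (t j) (t k)))).integrable_indicator
      measurableSet_Ioo
  have h := key_sum_sq (fun j x => (Ioo (0:ℝ) (t j)).indicator (fun _ => a j) x)
    (fun _ => (1:ℝ)) (fun _ => zero_le_one) hint
  calc (0:ℝ) ≤ _ := h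
    _ = _ := by
      refine Finset.sum_congr rfl fun j _ => Finset.sum_congr rfl fun k _ => ?_
      simp_rw [hpt j k]
      rw [integral_indicator measurableSet_Ioo, setIntegral_const, measureReal_def, Real.volume_Ioo,
        smul_eq_mul]
      rw [sub_zero, ENNReal.toReal_ofReal (le_min (ht j) (ht k))]
      ring

lemma real_psd (γ : ℝ) (hγ0 : 0 < γ) (hγ1 : γ ≤ 1) {n : ℕ} (t : Fin n → ℝ)
    (ht : ∀ i, 0 ≤ t i) (a : Fin n → ℝ) :
    0 ≤ ∑ j : Fin n, ∑ k : Fin n, a j * a k * Cker γ (t j) (t k) := by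
  rcases eq_or_lt_of_le hγ1 with h1 | h1
  · -- γ = 1
    subst h1
    have hC : ∀ j k : Fin n, Cker 1 (t j) (t k) = min (t j) (t k) := by
      intro j k
      unfold Cker
      rw [Real.rpow_one, Real.rpow_one]
      have := min_add_max (t j) (t k)
      linarith
    simp_rw [hC]
    exact min_psd t ht a
  · -- γ < 1
    have hF1 := Fγ_pos γ hγ0 h1
    rw [← mul_nonneg_iff_of_pos_left hF1]
    have hterm : ∀ j k : Fin n,
        Fγ γ 1 * (a j * a k * Cker γ (t j) (t k))
          = ∫ θ in Ioi (0:ℝ), a j * a k *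
              (θ ^ (-1-γ) * (Real.exp (-(max (t j) (t k) * θ))
                - Real.exp (-((t j + t k) * θ)))) := by
      intro j k
      have hmax : 0 ≤ max (t j) (t k) := le_max_of_le_left (ht j)
      have hsum : 0 ≤ t j + t k := add_nonneg (ht j) (ht k)
      have hCF : Fγ γ 1 * Cker γ (t j) (t k)
          = Fγ γ (t j + t k) - Fγ γ (max (t j) (t k)) := by
        rw [Fγ_scale γ _ hγ0 hsum, Fγ_scale γ _ hγ0 hmax]
        unfold Cker
        ring
      rw [show Fγ γ 1 * (a j * a k * Cker γ (t j) (t k))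
          = a j * a k * (Fγ γ 1 * Cker γ (t j) (t k)) by ring, hCF,
        Fγ_diff γ _ _ hγ0 h1 hmax hsum, ← integral_const_mul]
    have hswap : Fγ γ 1 * ∑ j : Fin n, ∑ k : Fin n, a j * a k * Cker γ (t j) (t k)
        = ∫ θ in Ioi (0:ℝ), ∑ j : Fin n, ∑ k : Fin n, a j * a k *
            (θ ^ (-1-γ) * (Real.exp (-(max (t j) (t k) * θ))
              - Real.exp (-((t j + t k) * θ)))) := by
      rw [Finset.mul_sum]
      simp_rw [Finset.mul_sum, hterm]
      have hik : ∀ j k : Fin n, IntegrableOn (fun θ : ℝ => a j * a k *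
          (θ ^ (-1-γ) * (Real.exp (-(max (t j) (t k) * θ))
            - Real.exp (-((t j + t k) * θ))))) (Ioi 0) := fun j k =>
        ((integrable_diff γ _ _ hγ0 h1 (le_max_of_le_left (ht j))
          (add_nonneg (ht j) (ht k))).const_mul _)
      have h2 : ∀ j : Fin n, (∑ k : Fin n, ∫ θ in Ioi (0:ℝ), a j * a k *
          (θ ^ (-1-γ) * (Real.exp (-(max (t j) (t k) * θ))
            - Real.exp (-((t j + t k) * θ)))))
          = ∫ θ in Ioi (0:ℝ), ∑ k : Fin n, a j * a k *
          (θ ^ (-1-γ) * (Real.exp (-(max (t j) (t k) * θ))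
            - Real.exp (-((t j + t k) * θ)))) := fun j =>
        (integral_finset_sum Finset.univ (fun k _ => hik j k)).symm
      simp_rw [h2]
      rw [← integral_finset_sum Finset.univ (fun j _ =>
        integrable_finset_sum Finset.univ (fun k _ => hik j k))]
    rw [hswap]
    apply setIntegral_nonneg measurableSet_Ioi
    intro θ hθ
    have hθp : (0:ℝ) < θ := hθ
    have hrw : ∀ j k : Fin n,
        a j * a k * (θ ^ (-1-γ) * (Real.exp (-(max (t j) (t k) * θ))
          - Real.exp (-((t j + t k) * θ))))
        = θ ^ (-1-γ) * (a j * a k *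
            (Real.exp (-(θ * (t j + t k))) * (Real.exp (θ * min (t j) (t k)) - 1))) := by
      intro j k
      have hmm : min (t j) (t k) + max (t j) (t k) = t j + t k := by
        have := min_add_max (t j) (t k)
        simpa using this
      have hexp : Real.exp (-(θ * (t j + t k))) * (Real.exp (θ * min (t j) (t k)) - 1)
          = Real.exp (-(max (t j) (t k) * θ)) - Real.exp (-((t j + t k) * θ)) := by
        rw [mul_sub, ← Real.exp_add, mul_one]
        congr 2
        · linear_combination θ * hmm
        · ring
      rw [hexp]
      ring
    simp_rw [hrw, ← Finset.mul_sum]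
    exact mul_nonneg (Real.rpow_nonneg hθp.le _) (S_nonneg t ht a θ hθp)

/-- For `0 < γ ≤ 1`, the kernel `C_γ` is nonnegative definite on `[0,∞)`. -/
theorem Cker_nonneg_definite (γ : ℝ) (hγ0 : 0 < γ) (hγ1 : γ ≤ 1)
    (n : ℕ) (t : Fin n → ℝ) (ht : ∀ i, 0 ≤ t i) (z : Fin n → ℂ) :
    0 ≤ ∑ j : Fin n, ∑ k : Fin n,
      z j * ((Cker γ (t j) (t k) : ℝ) : ℂ) * (starRingEnd ℂ) (z k) := by
  have hsymm : ∀ j k : Fin n, Cker γ (t j) (t k) = Cker γ (t k) (t j) := by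
    intro j k
    unfold Cker
    rw [add_comm, max_comm]
  rw [Complex.le_def]
  constructor
  · -- real part
    simp only [Complex.zero_re, Complex.re_sum, Complex.mul_re, Complex.mul_im,
      Complex.conj_re, Complex.conj_im, Complex.ofReal_re, Complex.ofReal_im,
      mul_zero, zero_mul, sub_zero, add_zero, zero_add]
    have hre : ∑ j : Fin n, ∑ k : Fin n,
        ((z j).re * Cker γ (t j) (t k) * (z k).re - (z j).im * Cker γ (t j) (t k) * (-(z k).im))
        = (∑ j : Fin n, ∑ k : Fin n, (z j).re * (z k).re * Cker γ (t j) (t k))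
          + ∑ j : Fin n, ∑ k : Fin n, (z j).im * (z k).im * Cker γ (t j) (t k) := by
      rw [← Finset.sum_add_distrib]
      refine Finset.sum_congr rfl fun j _ => ?_
      rw [← Finset.sum_add_distrib]
      refine Finset.sum_congr rfl fun k _ => ?_
      ring
    rw [hre]
    exact add_nonneg (real_psd γ hγ0 hγ1 t ht fun i => (z i).re)
      (real_psd γ hγ0 hγ1 t ht fun i => (z i).im)
  · -- imaginary part
    simp only [Complex.zero_im, Complex.im_sum, Complex.mul_re, Complex.mul_im,
      Complex.conj_re, Complex.conj_im, Complex.ofReal_re, Complex.ofReal_im,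
      mul_zero, zero_mul, sub_zero, add_zero, zero_add]
    have him : ∑ j : Fin n, ∑ k : Fin n,
        ((z j).re * Cker γ (t j) (t k) * (-(z k).im) + (z j).im * Cker γ (t j) (t k) * (z k).re)
        = (∑ j : Fin n, ∑ k : Fin n, (z j).im * (z k).re * Cker γ (t j) (t k))
          - ∑ j : Fin n, ∑ k : Fin n, (z j).re * (z k).im * Cker γ (t j) (t k) := by
      rw [← Finset.sum_sub_distrib]
      refine Finset.sum_congr rfl fun j _ => ?_
      rw [← Finset.sum_sub_distrib]
      refine Finset.sum_congr rfl fun k _ => ?_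
      ring
    rw [him, eq_comm, sub_eq_zero]
    rw [Finset.sum_comm]
    refine Finset.sum_congr rfl fun k _ => Finset.sum_congr rfl fun j _ => ?_
    rw [hsymm]
    ring
end

section
/- For every γ with 0 < γ ≤ 1, the kernel Q_γ on the nonnegative half-line defined by Q_γ(s,t) = (max(s,t))^γ − |t−s|^γ is nonnegative definite; that is, for every n ∈ ℕ, all t_1,…,t_n ≥ 0, and all complex numbers z_1,…,z_n, one has Σ_{j,k=1}^n z_j · Q_γ(t_j,t_k) · conj(z_k) ≥ 0 (this sum is real and nonnegative). -/
open scoped ComplexOrder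
open MeasureTheory

/-- The kernel `Q_γ(s,t) = (max(s,t))^γ − |t−s|^γ`. -/
noncomputable def Qker (γ s t : ℝ) : ℝ := max s t ^ γ - |t - s| ^ γ

/-- The region under the curve `u ↦ γ (s-u)^(γ-1)` over `[0,s)`. -/
noncomputable def QkerSet (γ s : ℝ) : Set (ℝ × ℝ) :=
  regionBetween 0 (fun u => γ * (s - u) ^ (γ - 1)) (Set.Ico 0 s)

lemma QkerSet_measurable (γ s : ℝ) : MeasurableSet (QkerSet γ s) := by
  refine measurableSet_regionBetween measurable_const ?_ measurableSet_Ico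
  fun_prop

lemma Qker_integrableOn (γ : ℝ) (hγ0 : 0 < γ) {s t : ℝ} (hs : 0 ≤ s) (hst : s ≤ t) :
    IntegrableOn (fun u => γ * (t - u) ^ (γ - 1)) (Set.Ico 0 s) volume := by
  have h1 : IntervalIntegrable (fun x : ℝ => x ^ (γ - 1)) volume (t - s) t :=
    intervalIntegral.intervalIntegrable_rpow' (by linarith)
  have h2 := (h1.comp_sub_left t).symm
  have h3 : IntervalIntegrable (fun x : ℝ => (t - x) ^ (γ - 1)) volume 0 s := by
    simpa [sub_sub_cancel, sub_self] using h2
  have h4 : IntegrableOn (fun x : ℝ => (t - x) ^ (γ - 1)) (Set.Ioc 0 s) volume :=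
    (intervalIntegrable_iff_integrableOn_Ioc_of_le hs).1 h3
  have h5 : IntegrableOn (fun x : ℝ => (t - x) ^ (γ - 1)) (Set.Ico 0 s) volume := by
    unfold IntegrableOn
    rw [Measure.restrict_congr_set Ico_ae_eq_Ioc]
    exact h4
  exact h5.const_mul γ

lemma QkerSet_inter (γ : ℝ) (hγ0 : 0 < γ) (hγ1 : γ ≤ 1) {s t : ℝ} (hst : s ≤ t) :
    QkerSet γ s ∩ QkerSet γ t
      = regionBetween 0 (fun u => γ * (t - u) ^ (γ - 1)) (Set.Ico 0 s) := by
  ext ⟨u, v⟩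
  simp only [QkerSet, regionBetween, Set.mem_inter_iff, Set.mem_setOf_eq, Set.mem_Ico,
    Set.mem_Ioo, Pi.zero_apply]
  constructor
  · rintro ⟨⟨⟨hu0, hus⟩, hv0, _⟩, ⟨_, _⟩, _, hvt⟩
    exact ⟨⟨hu0, hus⟩, hv0, hvt⟩
  · rintro ⟨⟨hu0, hus⟩, hv0, hvt⟩
    have hsu : 0 < s - u := by linarith
    have hkey : (t - u) ^ (γ - 1) ≤ (s - u) ^ (γ - 1) :=
      Real.rpow_le_rpow_of_nonpos hsu (by linarith) (by linarith)
    have hvs : v < γ * (s - u) ^ (γ - 1) :=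
      lt_of_lt_of_le hvt (by nlinarith)
    exact ⟨⟨⟨hu0, hus⟩, hv0, hvs⟩, ⟨hu0, by linarith⟩, hv0, hvt⟩

lemma QkerSet_volume_inter (γ : ℝ) (hγ0 : 0 < γ) (hγ1 : γ ≤ 1) {s t : ℝ}
    (hs : 0 ≤ s) (hst : s ≤ t) :
    volume (QkerSet γ s ∩ QkerSet γ t) = ENNReal.ofReal (Qker γ s t) := by
  rw [QkerSet_inter γ hγ0 hγ1 hst]
  have hint := Qker_integrableOn γ hγ0 hs hst
  have h0 : IntegrableOn (0 : ℝ → ℝ) (Set.Ico 0 s) volume := integrableOn_zero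
  have hvol := volume_regionBetween_eq_integral h0 hint measurableSet_Ico
    (fun u hu => by
      have : (0:ℝ) ≤ t - u := by
        rcases hu with ⟨hu0, hus⟩; linarith
      exact mul_nonneg hγ0.le (Real.rpow_nonneg this _))
  rw [Measure.volume_eq_prod, hvol]
  congr 1
  have hfun : ∀ y : ℝ, ((fun u => γ * (t - u) ^ (γ - 1)) - 0) y = γ * (t - y) ^ (γ - 1) := by
    intro y; simp
  rw [show (((fun u => γ * (t - u) ^ (γ - 1)) - 0) : ℝ → ℝ) = fun u => γ * (t - u) ^ (γ - 1)
    from funext hfun]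
  rw [setIntegral_congr_set Ico_ae_eq_Ioc, ← intervalIntegral.integral_of_le hs,
    intervalIntegral.integral_const_mul]
  have : ∫ u in (0:ℝ)..s, (t - u) ^ (γ - 1) = ∫ x in (t - s)..(t - 0), x ^ (γ - 1) :=
    intervalIntegral.integral_comp_sub_left (fun x => x ^ (γ - 1)) t
  rw [this, sub_zero, integral_rpow (Or.inl (by linarith)), sub_add_cancel]
  have hγne : γ ≠ 0 := ne_of_gt hγ0
  rw [Qker, max_eq_right hst, abs_of_nonneg (by linarith)]
  field_simp

lemma QkerSet_volume_ne_top (γ : ℝ) (hγ0 : 0 < γ) (hγ1 : γ ≤ 1) {s : ℝ} (hs : 0 ≤ s) :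
    volume (QkerSet γ s) ≠ ⊤ := by
  have := QkerSet_volume_inter γ hγ0 hγ1 hs (le_refl s)
  rw [Set.inter_self] at this
  rw [this]
  exact ENNReal.ofReal_ne_top

lemma Qker_symm (γ s t : ℝ) : Qker γ s t = Qker γ t s := by
  rw [Qker, Qker, max_comm, abs_sub_comm]

lemma Qker_eq_toReal_volume (γ : ℝ) (hγ0 : 0 < γ) (hγ1 : γ ≤ 1) {s t : ℝ}
    (hs : 0 ≤ s) (ht : 0 ≤ t) :
    Qker γ s t = (volume (QkerSet γ s ∩ QkerSet γ t)).toReal := by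
  have key : ∀ a b : ℝ, 0 ≤ a → a ≤ b →
      Qker γ a b = (volume (QkerSet γ a ∩ QkerSet γ b)).toReal := by
    intro a b ha hab
    rw [QkerSet_volume_inter γ hγ0 hγ1 ha hab, ENNReal.toReal_ofReal]
    rw [Qker, max_eq_right hab, abs_of_nonneg (by linarith)]
    have : (b - a) ^ γ ≤ b ^ γ := Real.rpow_le_rpow (by linarith) (by linarith) hγ0.le
    linarith
  rcases le_total s t with h | h
  · exact key s t hs h
  · rw [Qker_symm, Set.inter_comm]; exact key t s ht h

/-- General fact: the Gram kernel `(j,k) ↦ μ(A j ∩ A k)` is nonnegative definite. -/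
lemma inter_measure_nonneg_definite {α : Type*} [MeasurableSpace α] (μ : Measure α)
    (n : ℕ) (A : Fin n → Set α) (hm : ∀ j, MeasurableSet (A j))
    (hfin : ∀ j, μ (A j) ≠ ⊤) (z : Fin n → ℂ) :
    0 ≤ ∑ j : Fin n, ∑ k : Fin n,
      z j * (((μ (A j ∩ A k)).toReal : ℝ) : ℂ) * (starRingEnd ℂ) (z k) := by
  set f : α → ℂ := fun x => ∑ j : Fin n, (A j).indicator (fun _ => z j) x with hf
  have hmjk : ∀ j k : Fin n, MeasurableSet (A j ∩ A k) := fun j k => (hm j).inter (hm k)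
  have hint : ∀ j k : Fin n,
      Integrable ((A j ∩ A k).indicator (fun _ => z j * (starRingEnd ℂ) (z k))) μ := by
    intro j k
    refine (integrable_indicator_iff (hmjk j k)).2 (integrableOn_const ?_)
    exact (lt_of_le_of_lt (measure_mono Set.inter_subset_left) (lt_top_iff_ne_top.2 (hfin j))).ne
  have hpt : ∀ x, f x * (starRingEnd ℂ) (f x)
      = ∑ j : Fin n, ∑ k : Fin n,
          (A j ∩ A k).indicator (fun _ => z j * (starRingEnd ℂ) (z k)) x := by
    intro x
    rw [hf, map_sum, Finset.sum_mul_sum]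
    refine Finset.sum_congr rfl fun j _ => Finset.sum_congr rfl fun k _ => ?_
    by_cases hj : x ∈ A j <;> by_cases hk : x ∈ A k <;>
      simp [Set.indicator_of_mem, Set.indicator_of_notMem, hj, hk, Set.mem_inter_iff]
  have hie : ∫ x, f x * (starRingEnd ℂ) (f x) ∂μ
      = ∑ j : Fin n, ∑ k : Fin n,
          (μ (A j ∩ A k)).toReal • (z j * (starRingEnd ℂ) (z k)) := by
    simp_rw [hpt]
    rw [integral_finset_sum _ (fun j _ => integrable_finset_sum _ (fun k _ => hint j k))]
    refine Finset.sum_congr rfl fun j _ => ?_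
    rw [integral_finset_sum _ (fun k _ => hint j k)]
    exact Finset.sum_congr rfl fun k _ => integral_indicator_const _ (hmjk j k)
  have hsum : ∑ j : Fin n, ∑ k : Fin n,
      z j * (((μ (A j ∩ A k)).toReal : ℝ) : ℂ) * (starRingEnd ℂ) (z k)
      = ∫ x, f x * (starRingEnd ℂ) (f x) ∂μ := by
    rw [hie]
    refine Finset.sum_congr rfl fun j _ => Finset.sum_congr rfl fun k _ => ?_
    rw [Complex.real_smul]; ring
  rw [hsum]
  have hconj : ∀ x, f x * (starRingEnd ℂ) (f x) = ((Complex.normSq (f x) : ℝ) : ℂ) :=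
    fun x => Complex.mul_conj _
  simp_rw [hconj]
  have hco : (∫ x, ((Complex.normSq (f x) : ℝ) : ℂ) ∂μ)
      = ((∫ x, Complex.normSq (f x) ∂μ : ℝ) : ℂ) := integral_ofReal
  rw [hco]
  exact Complex.zero_le_real.2 (integral_nonneg fun x => Complex.normSq_nonneg _)

/-- For `0 < γ ≤ 1`, the kernel `Q_γ` is nonnegative definite on `[0,∞)`. -/
theorem Qker_nonneg_definite (γ : ℝ) (hγ0 : 0 < γ) (hγ1 : γ ≤ 1)
    (n : ℕ) (t : Fin n → ℝ) (ht : ∀ i, 0 ≤ t i) (z : Fin n → ℂ) :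
    0 ≤ ∑ j : Fin n, ∑ k : Fin n,
      z j * ((Qker γ (t j) (t k) : ℝ) : ℂ) * (starRingEnd ℂ) (z k) := by
  have hQ : ∀ j k : Fin n, Qker γ (t j) (t k)
      = (volume (QkerSet γ (t j) ∩ QkerSet γ (t k))).toReal :=
    fun j k => Qker_eq_toReal_volume γ hγ0 hγ1 (ht j) (ht k)
  simp_rw [hQ]
  exact inter_measure_nonneg_definite volume n (fun j => QkerSet γ (t j))
    (fun j => QkerSet_measurable γ (t j))
    (fun j => QkerSet_volume_ne_top γ hγ0 hγ1 (ht j)) z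
end

section
/- For every γ > 1, the kernel Q_γ defined by Q_γ(s,t) = (max(s,t))^γ − |t−s|^γ on [0,∞) × [0,∞) is NOT nonnegative definite: there exist n ∈ ℕ, points t_1,…,t_n ≥ 0, and complex numbers z_1,…,z_n such that Σ_{j,k=1}^n z_j · Q_γ(t_j,t_k) · conj(z_k) < 0. -/
open scoped ComplexOrder

/-- For `γ > 1`, the kernel `Q_γ` is NOT nonnegative definite on `[0,∞)`: some
quadratic form with nonnegative time points takes a negative value. -/
theorem Qker_not_nonneg_definite (γ : ℝ) (hγ : 1 < γ) :
    ∃ (n : ℕ) (t : Fin n → ℝ) (z : Fin n → ℂ), (∀ i, 0 ≤ t i) ∧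
      (∑ j : Fin n, ∑ k : Fin n,
        z j * ((Qker γ (t j) (t k) : ℝ) : ℂ) * (starRingEnd ℂ) (z k)) < 0 := by
  have hγ0 : (0:ℝ) < γ := by linarith
  have hγ1 : (0:ℝ) < γ - 1 := by linarith
  -- choose ε
  set c : ℝ := γ / 2 ^ (γ + 1) with hc
  have hc0 : 0 < c := div_pos hγ0 (Real.rpow_pos_of_pos two_pos _)
  set δ : ℝ := min 1 c with hδ
  have hδ0 : 0 < δ := lt_min one_pos hc0
  have hδ1 : δ ≤ 1 := min_le_left _ _
  have hδc : δ ≤ c := min_le_right _ _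
  set ε : ℝ := δ ^ (1 / (γ - 1)) / 2 with hε
  have hε0 : 0 < ε := by positivity
  have hε1 : ε ≤ 1 := by
    have : δ ^ (1 / (γ - 1)) ≤ 1 :=
      Real.rpow_le_one hδ0.le hδ1 (by positivity)
    rw [hε]; linarith
  -- key smallness
  have hkey : ε ^ (γ - 1) < c := by
    have h1 : ε ^ (γ - 1) = δ ^ ((1 / (γ - 1)) * (γ - 1)) / 2 ^ (γ - 1) := by
      rw [hε, Real.div_rpow (by positivity) (by norm_num), ← Real.rpow_mul hδ0.le]
    have h2 : (1 / (γ - 1)) * (γ - 1) = 1 := by field_simp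
    have h3 : (1:ℝ) < 2 ^ (γ - 1) := Real.one_lt_rpow_iff_of_pos two_pos |>.2 (Or.inl ⟨one_lt_two, hγ1⟩)
    calc ε ^ (γ - 1) = δ / 2 ^ (γ - 1) := by rw [h1, h2, Real.rpow_one]
    _ < δ := div_lt_self hδ0 h3
    _ ≤ c := hδc
  set B : ℝ := (1 + ε) ^ γ with hB
  set a : ℝ := ε ^ γ with ha
  have ha0 : 0 < a := Real.rpow_pos_of_pos hε0 _
  have hB1 : 1 ≤ B := Real.one_le_rpow (by linarith) hγ0.le
  have hBern : 1 + γ * ε ≤ B := by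
    have := one_add_mul_self_le_rpow_one_add (s := ε) (by linarith) hγ.le
    simpa [hB] using this
  have hB2 : B ≤ 2 ^ γ := Real.rpow_le_rpow (by linarith) (by linarith) hγ0.le
  have haeq : a = ε * ε ^ (γ - 1) := by
    have h := Real.rpow_add hε0 1 (γ - 1)
    rw [Real.rpow_one] at h
    rw [ha]
    nth_rewrite 1 [show γ = 1 + (γ - 1) by ring]
    rw [h]
  have h2aB : 2 * a * B < γ * ε := by
    have h1 : a < ε * c := by
      rw [haeq]
      exact (mul_lt_mul_iff_right₀ hε0).2 hkey
    have h2 : 2 * a * B ≤ 2 * a * 2 ^ γ := by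
      have : 0 < 2 * a := by linarith
      exact (mul_le_mul_iff_right₀ this).2 hB2
    have h3 : 2 * (ε * c) * 2 ^ γ = γ * ε := by
      rw [hc]
      have h21 : (2:ℝ) ^ (γ + 1) = 2 ^ γ * 2 := by
        rw [Real.rpow_add two_pos, Real.rpow_one]
      have hne : (0:ℝ) < 2 ^ (γ + 1) := Real.rpow_pos_of_pos two_pos _
      field_simp [h21]
      rw [h21, mul_comm]
    have hpos : (0:ℝ) < 2 * 2 ^ γ := by positivity
    calc 2 * a * B ≤ 2 * a * 2 ^ γ := h2
    _ < 2 * (ε * c) * 2 ^ γ := by nlinarith [Real.rpow_pos_of_pos two_pos γ]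
    _ = γ * ε := h3
  -- the real negativity
  have hneg : B - (B - a) ^ 2 < 0 := by nlinarith
  -- assemble
  refine ⟨2, ![1, 1 + ε], ![(-(B - a) : ℝ), 1], ?_, ?_⟩
  · intro i
    fin_cases i <;> simp <;> linarith
  · have hQ11 : Qker γ 1 1 = 1 := by
      simp [Qker, Real.zero_rpow (by linarith : γ ≠ 0), Real.one_rpow]
    have hQ12 : Qker γ 1 (1 + ε) = B - a := by
      simp only [Qker, hB, ha]
      rw [max_eq_right (by linarith), show (1 + ε - 1 : ℝ) = ε by ring,
        abs_of_pos hε0]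
    have hQ21 : Qker γ (1 + ε) 1 = B - a := by
      simp only [Qker, hB, ha]
      rw [max_eq_left (by linarith), show (1 - (1 + ε) : ℝ) = -ε by ring,
        abs_neg, abs_of_pos hε0]
    have hQ22 : Qker γ (1 + ε) (1 + ε) = B := by
      simp [Qker, Real.zero_rpow (by linarith : γ ≠ 0), hB]
    have : (∑ j : Fin 2, ∑ k : Fin 2,
        (![(-(B - a) : ℝ), 1] : Fin 2 → ℂ) j *
          ((Qker γ (![1, 1 + ε] j) (![1, 1 + ε] k) : ℝ) : ℂ) *
          (starRingEnd ℂ) ((![(-(B - a) : ℝ), 1] : Fin 2 → ℂ) k))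
        = ((B - (B - a) ^ 2 : ℝ) : ℂ) := by
      simp [Fin.sum_univ_two, hQ11, hQ12, hQ21, hQ22, Complex.conj_ofReal]
      ring
    rw [this]
    exact Complex.real_lt_real.2 hneg |>.trans_eq (by norm_num)
end

section
/- Let 0 < H ≤ 1/2 and let S_H denote the fractional Brownian motion covariance S_H(s,t) = (1/2)(s^{2H} + t^{2H} − |t−s|^{2H}). Then for all s,t ≥ 0, S_H(s,t) = (1/2)(Q_{2H}(s,t) + (min(s,t))^{2H}), where Q_γ(s,t) = (max(s,t))^γ − |t−s|^γ; in particular S_H is the sum of two nonnegative definite kernels, where (s,t) ↦ (min(s,t))^{2H} is the covariance of a time-rescaled Brownian motion. -/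
open MeasureTheory
open scoped ComplexOrder

/-- The fractional Brownian motion covariance with Hurst parameter `H`:
`S_H(s,t) = (1/2)(s^{2H} + t^{2H} − |t−s|^{2H})`. -/
noncomputable def Sfbm (H s t : ℝ) : ℝ :=
  (1 / 2) * (s ^ (2 * H) + t ^ (2 * H) - |t - s| ^ (2 * H))

/-- A kernel is nonnegative definite on `[0,∞)`. -/
def NonnegDefinite (F : ℝ → ℝ → ℝ) : Prop :=
  ∀ (n : ℕ) (t : Fin n → ℝ), (∀ i, 0 ≤ t i) → ∀ z : Fin n → ℂ,
    0 ≤ ∑ j : Fin n, ∑ k : Fin n,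
      z j * ((F (t j) (t k) : ℝ) : ℂ) * (starRingEnd ℂ) (z k)

/-- The `min` kernel is positive semidefinite (finite real version). -/
theorem min_psd_s5 {ι : Type*} [DecidableEq ι] : ∀ (s : Finset ι) (w x : ι → ℝ),
    (∀ i ∈ s, 0 ≤ w i) →
    0 ≤ ∑ j ∈ s, ∑ k ∈ s, x j * x k * min (w j) (w k) := by
  intro s
  induction s using Finset.strongInduction with
  | _ s ih =>
    intro w x hw
    rcases s.eq_empty_or_nonempty with rfl | hne
    · simp
    obtain ⟨i0, hi0, hmin⟩ := s.exists_min_image w hne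
    set m := w i0 with hm_def
    have hm : 0 ≤ m := hw i0 hi0
    have key : ∀ j ∈ s, ∀ k ∈ s,
        x j * x k * min (w j) (w k)
          = x j * x k * m + x j * x k * min (w j - m) (w k - m) := by
      intro j hj k hk
      rw [min_sub_sub_right]
      ring
    have split : ∑ j ∈ s, ∑ k ∈ s, x j * x k * min (w j) (w k)
        = m * (∑ j ∈ s, x j)^2
          + ∑ j ∈ s, ∑ k ∈ s, x j * x k * min (w j - m) (w k - m) := by
      rw [show m * (∑ j ∈ s, x j)^2 = ∑ j ∈ s, ∑ k ∈ s, x j * x k * m by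
        rw [sq, Finset.sum_mul_sum]
        rw [Finset.mul_sum]
        refine Finset.sum_congr rfl fun j hj => ?_
        rw [Finset.mul_sum]
        refine Finset.sum_congr rfl fun k hk => ?_
        ring]
      rw [← Finset.sum_add_distrib]
      refine Finset.sum_congr rfl fun j hj => ?_
      rw [← Finset.sum_add_distrib]
      exact Finset.sum_congr rfl fun k hk => key j hj k hk
    have hzero_row : ∀ k ∈ s, x i0 * x k * min (w i0 - m) (w k - m) = 0 := by
      intro k hk
      have : min (w i0 - m) (w k - m) = 0 := by
        rw [hm_def] at *
        have := hmin k hk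
        simp [min_eq_left, sub_nonneg.mpr this]; exact this
      rw [this, mul_zero]
    have hzero_col : ∀ j ∈ s, x j * x i0 * min (w j - m) (w i0 - m) = 0 := by
      intro j hj
      have : min (w j - m) (w i0 - m) = 0 := by
        have := hmin j hj
        rw [show w i0 - m = 0 from sub_self _]; exact min_eq_right (sub_nonneg.mpr this)
      rw [this, mul_zero]
    set e := s.erase i0 with he
    have hse : s = insert i0 e := (Finset.insert_erase hi0).symm
    have reduce : ∑ j ∈ s, ∑ k ∈ s, x j * x k * min (w j - m) (w k - m)
        = ∑ j ∈ e, ∑ k ∈ e, x j * x k * min (w j - m) (w k - m) := by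
      rw [hse, Finset.sum_insert (Finset.notMem_erase i0 s)]
      have h1 : ∑ k ∈ insert i0 e, x i0 * x k * min (w i0 - m) (w k - m) = 0 := by
        refine Finset.sum_eq_zero fun k hk => hzero_row k (by rw [hse]; exact hk)
      rw [h1, zero_add]
      refine Finset.sum_congr rfl fun j hj => ?_
      rw [Finset.sum_insert (Finset.notMem_erase i0 s)]
      rw [hzero_col j (by rw [hse]; exact Finset.mem_insert_of_mem hj), zero_add]
    have hsub : e ⊂ s := Finset.erase_ssubset hi0
    have ihe := ih e hsub (fun i => w i - m) x
      (fun i hi => sub_nonneg.mpr (hmin i (Finset.mem_of_mem_erase hi)))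
    rw [split, reduce]
    have : 0 ≤ m * (∑ j ∈ s, x j)^2 := mul_nonneg hm (sq_nonneg _)
    linarith

/-- A symmetric kernel whose real quadratic forms are nonnegative is
nonnegative definite in the complex sense. -/
theorem nonnegDefinite_of_real (F : ℝ → ℝ → ℝ)
    (hsymm : ∀ s t : ℝ, F s t = F t s)
    (hreal : ∀ (n : ℕ) (t : Fin n → ℝ), (∀ i, 0 ≤ t i) → ∀ x : Fin n → ℝ,
      0 ≤ ∑ j : Fin n, ∑ k : Fin n, x j * x k * F (t j) (t k)) :
    NonnegDefinite F := by
  intro n t ht z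
  set S := ∑ j : Fin n, ∑ k : Fin n,
      z j * ((F (t j) (t k) : ℝ) : ℂ) * (starRingEnd ℂ) (z k) with hS
  have hre : S.re = (∑ j : Fin n, ∑ k : Fin n,
        (z j).re * (z k).re * F (t j) (t k))
      + ∑ j : Fin n, ∑ k : Fin n, (z j).im * (z k).im * F (t j) (t k) := by
    rw [hS, Complex.re_sum, ← Finset.sum_add_distrib]
    refine Finset.sum_congr rfl fun j _ => ?_
    rw [Complex.re_sum, ← Finset.sum_add_distrib]
    refine Finset.sum_congr rfl fun k _ => ?_
    simp [Complex.mul_re, Complex.mul_im, Complex.conj_re, Complex.conj_im]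
    ring
  have him : S.im = 0 := by
    have him' : S.im = ∑ j : Fin n, ∑ k : Fin n,
        F (t j) (t k) * ((z j).im * (z k).re - (z j).re * (z k).im) := by
      rw [hS, Complex.im_sum]
      refine Finset.sum_congr rfl fun j _ => ?_
      rw [Complex.im_sum]
      refine Finset.sum_congr rfl fun k _ => ?_
      simp [Complex.mul_re, Complex.mul_im, Complex.conj_re, Complex.conj_im]
      ring
    set f : Fin n → Fin n → ℝ := fun j k =>
      F (t j) (t k) * ((z j).im * (z k).re - (z j).re * (z k).im) with hf
    have hswap : ∑ j : Fin n, ∑ k : Fin n, f j k = ∑ j : Fin n, ∑ k : Fin n, f k j :=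
      Finset.sum_comm
    have hneg : ∀ j k, f k j = - f j k := by
      intro j k
      simp only [hf]
      rw [hsymm (t k) (t j)]
      ring
    have : ∑ j : Fin n, ∑ k : Fin n, f j k = - ∑ j : Fin n, ∑ k : Fin n, f j k := by
      nth_rewrite 1 [hswap]
      rw [← Finset.sum_neg_distrib]
      refine Finset.sum_congr rfl fun j _ => ?_
      rw [← Finset.sum_neg_distrib]
      exact Finset.sum_congr rfl fun k _ => hneg j k
    have hz : ∑ j : Fin n, ∑ k : Fin n, f j k = 0 := by linarith
    rw [him', hz]
  have h1 := hreal n t ht (fun i => (z i).re)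
  have h2 := hreal n t ht (fun i => (z i).im)
  rw [Complex.le_def]
  constructor
  · simp only [Complex.zero_re]
    rw [hre]; linarith
  · rw [him, Complex.zero_im]

/-- Auxiliary: `g_s(y) = 1_{[0,s)}(y) (s-y)^{γ-1}`. -/
noncomputable def Qg (γ s y : ℝ) : ℝ :=
  (Set.Ico 0 s).indicator (fun y => (s - y) ^ (γ - 1)) y

lemma Qg_nonneg (γ s y : ℝ) : 0 ≤ Qg γ s y := by
  refine Set.indicator_nonneg (fun a ha => ?_) y
  exact Real.rpow_nonneg (by linarith [ha.2] : (0:ℝ) ≤ s - a) _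

lemma Qg_min_of_le {γ s t : ℝ} (hγ1 : γ ≤ 1) (_hs : 0 ≤ s) (hst : s ≤ t) (y : ℝ) :
    min (Qg γ s y) (Qg γ t y)
      = (Set.Ico 0 s).indicator (fun y => (t - y) ^ (γ - 1)) y := by
  by_cases hy : y ∈ Set.Ico 0 s
  · have hyt : y ∈ Set.Ico 0 t := ⟨hy.1, lt_of_lt_of_le hy.2 hst⟩
    rw [Set.indicator_of_mem hy]
    unfold Qg
    rw [Set.indicator_of_mem hy, Set.indicator_of_mem hyt]
    refine min_eq_right ?_
    exact Real.rpow_le_rpow_of_nonpos (by linarith [hy.2]) (by linarith) (by linarith)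
  · rw [Set.indicator_of_notMem hy]
    have h0 : Qg γ s y = 0 := by unfold Qg; rw [Set.indicator_of_notMem hy]
    rw [h0]
    exact min_eq_left (Qg_nonneg γ t y)

lemma Qg_min {γ s t : ℝ} (hγ1 : γ ≤ 1) (hs : 0 ≤ s) (ht : 0 ≤ t) (y : ℝ) :
    min (Qg γ s y) (Qg γ t y)
      = (Set.Ico 0 (min s t)).indicator (fun y => (max s t - y) ^ (γ - 1)) y := by
  rcases le_total s t with h | h
  · rw [min_eq_left h, max_eq_right h]; exact Qg_min_of_le hγ1 hs h y
  · rw [min_eq_right h, max_eq_left h, min_comm]; exact Qg_min_of_le hγ1 ht h y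

lemma integrable_indicator_rpow {γ m v : ℝ} (hγ0 : 0 < γ) (hm : 0 ≤ m) (hmv : m ≤ v) :
    Integrable ((Set.Ico 0 m).indicator (fun y => (v - y) ^ (γ - 1))) := by
  have h1 : IntervalIntegrable (fun x : ℝ => x ^ (γ - 1)) volume (v - m) v :=
    intervalIntegral.intervalIntegrable_rpow' (by linarith)
  have h2 := h1.comp_sub_left v
  have hsimp1 : v - (v - m) = m := by ring
  have hsimp2 : v - v = 0 := by ring
  rw [hsimp1, hsimp2] at h2
  have h3 : IntegrableOn (fun y : ℝ => (v - y) ^ (γ - 1)) (Set.Ioc 0 m) := by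
    have := h2.symm
    rwa [intervalIntegrable_iff, Set.uIoc_of_le hm] at this
  have h4 : IntegrableOn (fun y : ℝ => (v - y) ^ (γ - 1)) (Set.Ico 0 m) :=
    h3.congr_set_ae Ico_ae_eq_Ioc
  exact h4.integrable_indicator measurableSet_Ico

lemma integral_indicator_rpow {γ m v : ℝ} (hγ0 : 0 < γ) (hm : 0 ≤ m) :
    ∫ y, (Set.Ico 0 m).indicator (fun y => (v - y) ^ (γ - 1)) y
      = (v ^ γ - (v - m) ^ γ) / γ := by
  rw [integral_indicator measurableSet_Ico]
  rw [setIntegral_congr_set Ico_ae_eq_Ioc]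
  rw [← intervalIntegral.integral_of_le hm]
  rw [intervalIntegral.integral_comp_sub_left (fun x => x ^ (γ - 1)) v]
  rw [sub_zero]
  rw [integral_rpow (Or.inl (by linarith : (-1:ℝ) < γ - 1))]
  rw [show γ - 1 + 1 = γ by ring]

lemma Qker_integral {γ s t : ℝ} (hγ0 : 0 < γ) (hγ1 : γ ≤ 1) (hs : 0 ≤ s) (ht : 0 ≤ t) :
    Qker γ s t = γ * ∫ y, min (Qg γ s y) (Qg γ t y) := by
  have hfun : (fun y => min (Qg γ s y) (Qg γ t y))
      = (Set.Ico 0 (min s t)).indicator (fun y => (max s t - y) ^ (γ - 1)) :=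
    funext (Qg_min hγ1 hs ht)
  rw [hfun, integral_indicator_rpow hγ0 (le_min hs ht)]
  have habs : max s t - min s t = |t - s| := by
    rw [max_sub_min_eq_abs, abs_sub_comm]
  rw [habs]
  field_simp [Qker]
  rfl

lemma Qg_min_integrable {γ s t : ℝ} (hγ0 : 0 < γ) (hγ1 : γ ≤ 1) (hs : 0 ≤ s) (ht : 0 ≤ t) :
    Integrable (fun y => min (Qg γ s y) (Qg γ t y)) := by
  have hfun : (fun y => min (Qg γ s y) (Qg γ t y))
      = (Set.Ico 0 (min s t)).indicator (fun y => (max s t - y) ^ (γ - 1)) :=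
    funext (Qg_min hγ1 hs ht)
  rw [hfun]
  exact integrable_indicator_rpow hγ0 (le_min hs ht) min_le_max

/-- Real positive semidefiniteness of `Qker γ` for `0 < γ ≤ 1`. -/
theorem qker_real_psd {γ : ℝ} (hγ0 : 0 < γ) (hγ1 : γ ≤ 1) (n : ℕ) (t : Fin n → ℝ)
    (ht : ∀ i, 0 ≤ t i) (x : Fin n → ℝ) :
    0 ≤ ∑ j : Fin n, ∑ k : Fin n, x j * x k * Qker γ (t j) (t k) := by
  have key : ∀ j k : Fin n, x j * x k * Qker γ (t j) (t k)
      = γ * ∫ y, x j * x k * min (Qg γ (t j) y) (Qg γ (t k) y) := by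
    intro j k
    rw [Qker_integral hγ0 hγ1 (ht j) (ht k), integral_const_mul]
    ring
  have h1 : ∑ j : Fin n, ∑ k : Fin n, x j * x k * Qker γ (t j) (t k)
      = γ * ∑ j : Fin n, ∑ k : Fin n,
          ∫ y, x j * x k * min (Qg γ (t j) y) (Qg γ (t k) y) := by
    rw [Finset.mul_sum]
    refine Finset.sum_congr rfl fun j _ => ?_
    rw [Finset.mul_sum]
    exact Finset.sum_congr rfl fun k _ => key j k
  have h2 : ∑ j : Fin n, ∑ k : Fin n,
        ∫ y, x j * x k * min (Qg γ (t j) y) (Qg γ (t k) y)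
      = ∫ y, ∑ p ∈ Finset.univ ×ˢ (Finset.univ : Finset (Fin n)),
          x p.1 * x p.2 * min (Qg γ (t p.1) y) (Qg γ (t p.2) y) := by
    rw [← Finset.sum_product']
    rw [integral_finset_sum]
    intro p _
    exact (Qg_min_integrable hγ0 hγ1 (ht p.1) (ht p.2)).const_mul _
  rw [h1, h2]
  refine mul_nonneg hγ0.le (integral_nonneg fun y => ?_)
  show (0:ℝ) ≤ _
  have hp : ∑ j : Fin n, ∑ k : Fin n,
        x j * x k * min (Qg γ (t j) y) (Qg γ (t k) y)
      = ∑ p ∈ Finset.univ ×ˢ (Finset.univ : Finset (Fin n)),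
        x p.1 * x p.2 * min (Qg γ (t p.1) y) (Qg γ (t p.2) y) := by
    rw [← Finset.sum_product']
  rw [← hp]
  exact min_psd_s5 Finset.univ (fun i => Qg γ (t i) y) x (fun i _ => Qg_nonneg γ (t i) y)

/-- For `0 < H ≤ 1/2`, `S_H(s,t) = (1/2)(Q_{2H}(s,t) + (min(s,t))^{2H})`, and
`S_H` is the sum of two nonnegative definite kernels: `(1/2)Q_{2H}` and
`(1/2)(min(s,t))^{2H}`, the latter being the covariance of a time-rescaled
Brownian motion. -/
theorem Sfbm_decomposition (H : ℝ) (hH0 : 0 < H) (hH1 : H ≤ 1 / 2) :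
    (∀ s t : ℝ, 0 ≤ s → 0 ≤ t →
      Sfbm H s t = (1 / 2) * (Qker (2 * H) s t + min s t ^ (2 * H))) ∧
    NonnegDefinite (fun s t => (1 / 2) * Qker (2 * H) s t) ∧
    NonnegDefinite (fun s t => (1 / 2) * min s t ^ (2 * H)) := by
  set γ := 2 * H with hγ_def
  have hγ0 : 0 < γ := by positivity
  have hγ1 : γ ≤ 1 := by rw [hγ_def]; linarith
  refine ⟨?_, ?_, ?_⟩
  · intro s t hs ht
    unfold Sfbm Qker
    rcases le_total s t with h | h
    · rw [max_eq_right h, min_eq_left h]; ring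
    · rw [max_eq_left h, min_eq_right h]; ring
  · refine nonnegDefinite_of_real _ (fun s t => ?_) (fun n t ht x => ?_)
    · unfold Qker; rw [max_comm, abs_sub_comm]
    · have heq : ∑ j : Fin n, ∑ k : Fin n, x j * x k * ((1:ℝ)/2 * Qker γ (t j) (t k))
          = (1/2) * ∑ j : Fin n, ∑ k : Fin n, x j * x k * Qker γ (t j) (t k) := by
        rw [Finset.mul_sum]
        refine Finset.sum_congr rfl fun j _ => ?_
        rw [Finset.mul_sum]
        refine Finset.sum_congr rfl fun k _ => ?_
        ring
      rw [heq]
      have := qker_real_psd hγ0 hγ1 n t ht x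
      linarith
  · refine nonnegDefinite_of_real _ (fun s t => ?_) (fun n t ht x => ?_)
    · rw [min_comm]
    · have hmin : ∀ j k : Fin n, min (t j) (t k) ^ γ = min (t j ^ γ) (t k ^ γ) := by
        intro j k
        rcases le_total (t j) (t k) with h | h
        · rw [min_eq_left h, min_eq_left (Real.rpow_le_rpow (ht j) h hγ0.le)]
        · rw [min_eq_right h, min_eq_right (Real.rpow_le_rpow (ht k) h hγ0.le)]
      have heq : ∑ j : Fin n, ∑ k : Fin n, x j * x k * ((1:ℝ)/2 * min (t j) (t k) ^ γ)
          = (1/2) * ∑ j : Fin n, ∑ k : Fin n, x j * x k * min (t j ^ γ) (t k ^ γ) := by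
        rw [Finset.mul_sum]
        refine Finset.sum_congr rfl fun j _ => ?_
        rw [Finset.mul_sum]
        refine Finset.sum_congr rfl fun k _ => ?_
        rw [hmin j k]
        ring
      rw [heq]
      have := min_psd_s5 Finset.univ (fun i => t i ^ γ) x
        (fun i _ => Real.rpow_nonneg (ht i) γ)
      linarith
end

section
/- For every γ with 0 < γ < 1 and all s,t ≥ 0, the kernel Q_γ(s,t) = (max(s,t))^γ − |t−s|^γ admits the integral representation Q_γ(s,t) = c_γ · ∫₀^∞ e^{−|t−s|y}·(1 − e^{−min(s,t)·y})·y^{−(1+γ)} dy, where c_γ = γ/Γ(1−γ) and Γ is the Euler Gamma function. -/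
open MeasureTheory

section aux

variable {γ : ℝ}

/-- Integrability of `y ↦ y^(-γ) * exp (-(a*y))` on `(0,∞)`. -/
lemma expInt (hγ0 : 0 < γ) (hγ1 : γ < 1) {a : ℝ} (ha : 0 < a) :
    IntegrableOn (fun y : ℝ => y ^ (-γ) * Real.exp (-(a * y))) (Set.Ioi 0) := by
  have h := integrableOn_rpow_mul_exp_neg_mul_rpow (p := 1) (s := -γ) (b := a)
    (by linarith) one_pos ha
  refine h.congr_fun (fun y hy => ?_) measurableSet_Ioi
  beta_reduce
  rw [Real.rpow_one]
  ring_nf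

/-- Value of `∫ y in (0,∞), y^(-γ) * exp (-(a*y))`. -/
lemma expVal (hγ0 : 0 < γ) (hγ1 : γ < 1) {a : ℝ} (ha : 0 < a) :
    ∫ y in Set.Ioi (0:ℝ), y ^ (-γ) * Real.exp (-(a * y))
      = a ^ (γ - 1) * Real.Gamma (1 - γ) := by
  have h := integral_rpow_mul_exp_neg_mul_rpow (p := 1) (q := -γ) (b := a)
    one_pos (by linarith) ha
  have heq : ∫ y in Set.Ioi (0:ℝ), y ^ (-γ) * Real.exp (-(a * y))
      = ∫ x in Set.Ioi (0:ℝ), x ^ (-γ) * Real.exp (-a * x ^ (1:ℝ)) := by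
    refine setIntegral_congr_fun measurableSet_Ioi (fun y hy => ?_)
    rw [Real.rpow_one]
    ring_nf
  rw [heq, h]
  rw [show -(-γ + 1) / 1 = γ - 1 by ring, show (-γ + 1) / 1 = 1 - γ by ring]
  ring

/-- Integrability of the basic integrand on `(0,∞)`, for `a ≥ 0`. -/
lemma gInt (hγ0 : 0 < γ) (hγ1 : γ < 1) {a : ℝ} (ha : 0 ≤ a) :
    IntegrableOn (fun y : ℝ => (1 - Real.exp (-(a * y))) * y ^ (-(1 + γ)))
      (Set.Ioi 0) := by
  have hmeas : Measurable (fun y : ℝ => (1 - Real.exp (-(a * y))) * y ^ (-(1 + γ))) := by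
    exact ((measurable_const.sub ((measurable_id.const_mul a).neg.exp)).mul
      (measurable_id.pow_const _))
  have hunion : Set.Ioc (0:ℝ) 1 ∪ Set.Ioi 1 = Set.Ioi 0 :=
    Set.Ioc_union_Ioi_eq_Ioi (by norm_num)
  rw [← hunion]
  refine IntegrableOn.union ?_ ?_
  · -- on (0,1], bound by a * y^(-γ)
    have hb : IntegrableOn (fun y : ℝ => a * y ^ (-γ)) (Set.Ioc 0 1) := by
      refine Integrable.const_mul ?_ a
      have := intervalIntegral.intervalIntegrable_rpow' (a := 0) (b := 1)
        (r := -γ) (by linarith)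
      rwa [intervalIntegrable_iff_integrableOn_Ioc_of_le (by norm_num)] at this
    refine Integrable.mono' hb (hmeas.aestronglyMeasurable.restrict) ?_
    refine (ae_restrict_iff' measurableSet_Ioc).2 (Filter.Eventually.of_forall fun y hy => ?_)
    obtain ⟨hy0, _⟩ := hy
    have hexp : Real.exp (-(a * y)) ≤ 1 := Real.exp_le_one_iff.2 (neg_nonpos.mpr (by positivity))
    have h1 : 1 - Real.exp (-(a * y)) ≤ a * y := by
      have := Real.add_one_le_exp (-(a * y)); linarith
    have h0 : 0 ≤ 1 - Real.exp (-(a * y)) := by linarith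
    have hyp : (0:ℝ) < y ^ (-(1 + γ)) := Real.rpow_pos_of_pos hy0 _
    rw [Real.norm_eq_abs, abs_of_nonneg (by positivity)]
    have : (1 - Real.exp (-(a * y))) * y ^ (-(1 + γ)) ≤ (a * y) * y ^ (-(1 + γ)) :=
      mul_le_mul_of_nonneg_right h1 hyp.le
    refine this.trans (le_of_eq ?_)
    rw [show (-γ:ℝ) = -(1+γ)+1 by ring, Real.rpow_add_one hy0.ne']
    ring
  · -- on (1,∞), bound by y^(-(1+γ))
    have hb : IntegrableOn (fun y : ℝ => y ^ (-(1 + γ))) (Set.Ioi 1) :=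
      integrableOn_Ioi_rpow_of_lt (by linarith) one_pos
    refine Integrable.mono' hb (hmeas.aestronglyMeasurable.restrict) ?_
    refine (ae_restrict_iff' measurableSet_Ioi).2 (Filter.Eventually.of_forall fun y hy => ?_)
    have hy0 : (0:ℝ) < y := lt_trans one_pos hy
    have hexp : Real.exp (-(a * y)) ≤ 1 := Real.exp_le_one_iff.2 (neg_nonpos.mpr (by positivity))
    have hexp0 : (0:ℝ) < Real.exp (-(a * y)) := Real.exp_pos _
    have hyp : (0:ℝ) < y ^ (-(1 + γ)) := Real.rpow_pos_of_pos hy0 _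
    rw [Real.norm_eq_abs, abs_of_nonneg (by nlinarith)]
    nlinarith

/-- Integration by parts on `(ε,∞)`. -/
lemma step (hγ0 : 0 < γ) (hγ1 : γ < 1) {a ε : ℝ} (ha : 0 < a) (hε : 0 < ε) :
    ∫ y in Set.Ioi ε, (1 - Real.exp (-(a * y))) * y ^ (-(1 + γ))
      = (1 - Real.exp (-(a * ε))) * ε ^ (-γ) / γ
        + (a / γ) * ∫ y in Set.Ioi ε, y ^ (-γ) * Real.exp (-(a * y)) := by
  set F : ℝ → ℝ := fun y => -((1 - Real.exp (-(a * y))) * y ^ (-γ)) / γ with hF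
  set f' : ℝ → ℝ := fun y => (1 - Real.exp (-(a * y))) * y ^ (-(1 + γ))
      - (a / γ) * (y ^ (-γ) * Real.exp (-(a * y))) with hf'
  have hderiv : ∀ y ∈ Set.Ici ε, HasDerivAt F (f' y) y := by
    intro y hy
    have hy0 : (0:ℝ) < y := lt_of_lt_of_le hε hy
    have h1 : HasDerivAt (fun y : ℝ => 1 - Real.exp (-(a * y)))
        (a * Real.exp (-(a * y))) y := by
      have hin : HasDerivAt (fun y : ℝ => -(a * y)) (-a) y := by
        exact (((hasDerivAt_id y).const_mul a).neg).congr_deriv (by ring)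
      have := (Real.hasDerivAt_exp (-(a * y))).comp y hin
      exact ((hasDerivAt_const y (1:ℝ)).sub this).congr_deriv (by ring)
    have h2 : HasDerivAt (fun y : ℝ => y ^ (-γ)) (-γ * y ^ (-γ - 1)) y :=
      Real.hasDerivAt_rpow_const (Or.inl hy0.ne')
    have h3 := ((h1.mul h2).neg).div_const γ
    refine h3.congr_deriv (Eq.symm ?_)
    rw [hf', show (-(1+γ):ℝ) = -γ-1 by ring]
    field_simp
    ring
  have hint1 : IntegrableOn (fun y : ℝ => (1 - Real.exp (-(a * y))) * y ^ (-(1 + γ)))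
      (Set.Ioi ε) :=
    (gInt hγ0 hγ1 ha.le).mono_set (Set.Ioi_subset_Ioi hε.le)
  have hint2 : IntegrableOn (fun y : ℝ => y ^ (-γ) * Real.exp (-(a * y))) (Set.Ioi ε) :=
    (expInt hγ0 hγ1 ha).mono_set (Set.Ioi_subset_Ioi hε.le)
  have hintf' : IntegrableOn f' (Set.Ioi ε) := hint1.sub (hint2.const_mul _)
  have htends : Filter.Tendsto F Filter.atTop (nhds 0) := by
    have he : Filter.Tendsto (fun y : ℝ => Real.exp (-(a * y))) Filter.atTop (nhds 0) := by
      have := Real.tendsto_exp_neg_atTop_nhds_zero.comp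
        (Filter.tendsto_id.const_mul_atTop ha)
      exact this
    have hr : Filter.Tendsto (fun y : ℝ => y ^ (-γ)) Filter.atTop (nhds 0) :=
      tendsto_rpow_neg_atTop hγ0
    have hone : Filter.Tendsto (fun _ : ℝ => (1:ℝ)) Filter.atTop (nhds 1) :=
      tendsto_const_nhds
    have := (((hone.sub he).mul hr).neg).div_const γ
    simpa using this
  have hFTC := MeasureTheory.integral_Ioi_of_hasDerivAt_of_tendsto' hderiv hintf' htends
  have hsplit : ∫ y in Set.Ioi ε, f' y
      = (∫ y in Set.Ioi ε, (1 - Real.exp (-(a * y))) * y ^ (-(1 + γ)))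
        - (a / γ) * ∫ y in Set.Ioi ε, y ^ (-γ) * Real.exp (-(a * y)) := by
    rw [hf']
    rw [integral_sub hint1 (hint2.const_mul _), integral_const_mul]
  rw [hsplit] at hFTC
  have hFε : F ε = -((1 - Real.exp (-(a * ε))) * ε ^ (-γ)) / γ := rfl
  rw [hFε] at hFTC
  linear_combination hFTC

/-- Value of the basic integral, for `a > 0`. -/
lemma gValPos (hγ0 : 0 < γ) (hγ1 : γ < 1) {a : ℝ} (ha : 0 < a) :
    ∫ y in Set.Ioi (0:ℝ), (1 - Real.exp (-(a * y))) * y ^ (-(1 + γ))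
      = Real.Gamma (1 - γ) / γ * a ^ γ := by
  set g : ℝ → ℝ := fun y => (1 - Real.exp (-(a * y))) * y ^ (-(1 + γ)) with hg
  set G : ℝ → ℝ := fun y => y ^ (-γ) * Real.exp (-(a * y)) with hG
  set e : ℕ → ℝ := fun n => ((n : ℝ) + 1)⁻¹ with he
  have hepos : ∀ n, 0 < e n := fun n => by positivity
  have hsm : ∀ n : ℕ, MeasurableSet (Set.Ioi (e n)) := fun n => measurableSet_Ioi
  have hmono : Monotone (fun n : ℕ => Set.Ioi (e n)) := by
    intro n m hnm
    refine Set.Ioi_subset_Ioi ?_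
    simp only [he]
    gcongr
  have hun : (⋃ n : ℕ, Set.Ioi (e n)) = Set.Ioi (0:ℝ) := by
    ext x
    simp only [Set.mem_iUnion, Set.mem_Ioi]
    constructor
    · rintro ⟨n, hn⟩; exact lt_trans (hepos n) hn
    · intro hx
      obtain ⟨n, hn⟩ := exists_nat_one_div_lt hx
      refine ⟨n, ?_⟩
      simp only [he]
      rwa [← one_div]
  have hgi : IntegrableOn g (Set.Ioi 0) := gInt hγ0 hγ1 ha.le
  have hGi : IntegrableOn G (Set.Ioi 0) := expInt hγ0 hγ1 ha
  have h1 : Filter.Tendsto (fun n => ∫ y in Set.Ioi (e n), g y) Filter.atTop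
      (nhds (∫ y in Set.Ioi (0:ℝ), g y)) := by
    have := tendsto_setIntegral_of_monotone hsm hmono (f := g) (by rw [hun]; exact hgi)
    rwa [hun] at this
  have h2 : Filter.Tendsto (fun n => ∫ y in Set.Ioi (e n), G y) Filter.atTop
      (nhds (∫ y in Set.Ioi (0:ℝ), G y)) := by
    have := tendsto_setIntegral_of_monotone hsm hmono (f := G) (by rw [hun]; exact hGi)
    rwa [hun] at this
  have h3 : Filter.Tendsto
      (fun n => (1 - Real.exp (-(a * e n))) * (e n) ^ (-γ) / γ) Filter.atTop (nhds 0) := by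
    refine squeeze_zero (fun n => ?_) (fun n => ?_)
      (g := fun n => (a / γ) * (e n) ^ (1 - γ)) ?_
    · show 0 ≤ (1 - Real.exp (-(a * e n))) * (e n) ^ (-γ) / γ
      have hexp : Real.exp (-(a * e n)) ≤ 1 :=
        Real.exp_le_one_iff.2 (neg_nonpos.mpr (mul_nonneg ha.le (hepos n).le))
      have hrp := Real.rpow_pos_of_pos (hepos n) (-γ)
      exact div_nonneg (mul_nonneg (by linarith) hrp.le) hγ0.le
    · show (1 - Real.exp (-(a * e n))) * (e n) ^ (-γ) / γ ≤ a / γ * (e n) ^ (1 - γ)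
      have h1e : 1 - Real.exp (-(a * e n)) ≤ a * e n := by
        have := Real.add_one_le_exp (-(a * e n)); linarith
      have hrp : (0:ℝ) < (e n) ^ (-γ) := Real.rpow_pos_of_pos (hepos n) _
      have key : (1 - Real.exp (-(a * e n))) * (e n) ^ (-γ) ≤ a * (e n) ^ (1 - γ) := by
        calc (1 - Real.exp (-(a * e n))) * (e n) ^ (-γ)
            ≤ (a * e n) * (e n) ^ (-γ) := mul_le_mul_of_nonneg_right h1e hrp.le
          _ = a * (e n) ^ (1 - γ) := by
              rw [show (1-γ:ℝ) = -γ+1 by ring, Real.rpow_add_one (hepos n).ne']; ring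
      rw [div_mul_eq_mul_div]
      exact (div_le_div_iff_of_pos_right hγ0).mpr key
    · have ht : Filter.Tendsto (fun n : ℕ => (e n) ^ (1 - γ)) Filter.atTop (nhds 0) := by
        have hnat : Filter.Tendsto (fun n : ℕ => (n : ℝ) + 1) Filter.atTop Filter.atTop :=
          Filter.tendsto_atTop_add_const_right _ 1 tendsto_natCast_atTop_atTop
        have hr : Filter.Tendsto (fun x : ℝ => x ^ (-(1 - γ))) Filter.atTop (nhds 0) :=
          tendsto_rpow_neg_atTop (by linarith)
        have := hr.comp hnat
        refine this.congr (fun n => ?_)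
        simp only [Function.comp_apply, he]
        rw [Real.inv_rpow (by positivity), ← Real.rpow_neg (by positivity)]
      simpa using ht.const_mul (a / γ)
  have hstep : ∀ n, ∫ y in Set.Ioi (e n), g y
      = (1 - Real.exp (-(a * e n))) * (e n) ^ (-γ) / γ
        + (a / γ) * ∫ y in Set.Ioi (e n), G y :=
    fun n => step hγ0 hγ1 ha (hepos n)
  have hcomb : Filter.Tendsto (fun n => ∫ y in Set.Ioi (e n), g y) Filter.atTop
      (nhds (0 + (a / γ) * ∫ y in Set.Ioi (0:ℝ), G y)) := by
    have := h3.add (h2.const_mul (a / γ))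
    refine this.congr (fun n => (hstep n).symm)
  have := tendsto_nhds_unique h1 hcomb
  have haa : a * a ^ (γ - 1) = a ^ γ := by
    have h := Real.rpow_add ha 1 (γ - 1)
    rw [Real.rpow_one] at h
    rw [← h]
    congr 1
    ring
  rw [this, expVal hγ0 hγ1 ha, ← haa]
  ring

/-- Value of the basic integral, for `a ≥ 0`. -/
lemma gVal (hγ0 : 0 < γ) (hγ1 : γ < 1) {a : ℝ} (ha : 0 ≤ a) :
    ∫ y in Set.Ioi (0:ℝ), (1 - Real.exp (-(a * y))) * y ^ (-(1 + γ))
      = Real.Gamma (1 - γ) / γ * a ^ γ := by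
  rcases ha.eq_or_lt with h | h
  · simp [← h, Real.zero_rpow hγ0.ne']
  · exact gValPos hγ0 hγ1 h

end aux

/-- For `0 < γ < 1` and `s,t ≥ 0`,
`Q_γ(s,t) = c_γ ∫₀^∞ e^{−|t−s|y}(1 − e^{−min(s,t) y}) y^{−(1+γ)} dy`
with `c_γ = γ / Γ(1−γ)`. -/
theorem Qker_integral_repr (γ : ℝ) (hγ0 : 0 < γ) (hγ1 : γ < 1)
    (s t : ℝ) (hs : 0 ≤ s) (ht : 0 ≤ t) :
    Qker γ s t = (γ / Real.Gamma (1 - γ)) *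
      ∫ y in Set.Ioi (0 : ℝ),
        Real.exp (-(|t - s| * y)) * (1 - Real.exp (-(min s t * y))) *
          y ^ (-(1 + γ)) := by
  have hd : (0:ℝ) ≤ |t - s| := abs_nonneg _
  have hm : (0:ℝ) ≤ min s t := le_min hs ht
  have hM : (0:ℝ) ≤ max s t := le_max_of_le_left hs
  have hsum : |t - s| + min s t = max s t := by
    rcases le_total s t with h | h
    · rw [abs_of_nonneg (by linarith), min_eq_left h, max_eq_right h]; ring
    · rw [abs_of_nonpos (by linarith), min_eq_right h, max_eq_left h]; ring
  have hcongr : ∫ y in Set.Ioi (0 : ℝ),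
        Real.exp (-(|t - s| * y)) * (1 - Real.exp (-(min s t * y))) * y ^ (-(1 + γ))
      = ∫ y in Set.Ioi (0 : ℝ),
        ((1 - Real.exp (-(max s t * y))) * y ^ (-(1 + γ))
          - (1 - Real.exp (-(|t - s| * y))) * y ^ (-(1 + γ))) := by
    refine setIntegral_congr_fun measurableSet_Ioi (fun y hy => ?_)
    have hexp : Real.exp (-(|t - s| * y)) * Real.exp (-(min s t * y))
        = Real.exp (-(max s t * y)) := by
      rw [← Real.exp_add, ← hsum]; ring_nf
    have : Real.exp (-(|t - s| * y)) * (1 - Real.exp (-(min s t * y)))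
        = (1 - Real.exp (-(max s t * y))) - (1 - Real.exp (-(|t - s| * y))) := by
      rw [← hexp]; ring
    rw [this]
    ring
  rw [hcongr, integral_sub (gInt hγ0 hγ1 hM) (gInt hγ0 hγ1 hd),
    gVal hγ0 hγ1 hM, gVal hγ0 hγ1 hd]
  have hΓ : Real.Gamma (1 - γ) ≠ 0 :=
    (Real.Gamma_pos_of_pos (by linarith)).ne'
  rw [Qker]
  field_simp
end
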